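/- Let H be a complex Hilbert space, k ∈ ℕ, H^{⊗k} the k-fold Hilbert space tensor power, V^{⊗k} the set of unit product vectors η₁⊗…⊗η_k with each ηᵢ a unit vector of H, and K^{⊗k} the norm-closed convex hull in B(H^{⊗k})_* of {ω_{ξ,η} : ξ, η ∈ V^{⊗k}}. Then every normal state φ on B(H^{⊗k}) satisfies q_{K^{⊗k}}(φ) ≥ 1, and q_{K^{⊗k}}(φ) = 1 if and only if φ is separable, i.e. φ lies in the norm-closed convex hull of {ω_ξ : ξ ∈ V^{⊗k}}. -/

import Mathlib

noncomputable section

open scoped InnerProductSpace ENNReal Pointwise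

/-- The vector functional `ω_{ξ,η}` on `B(H)` given by `x ↦ ⟨xξ, η⟩`
(linear in `x`; in Mathlib's convention this is `⟪η, x ξ⟫_ℂ`). -/
def omegaFunctional {H : Type*} [NormedAddCommGroup H] [InnerProductSpace ℂ H]
    (ξ η : H) : (H →L[ℂ] H) →L[ℂ] ℂ :=
  (innerSL ℂ η).comp (ContinuousLinearMap.apply ℂ H ξ)

/-- A continuous linear functional on `B(H)` is *normal* if it lies in the norm closure of the
linear span of the vector functionals (this is the predual `B(H)_*`, i.e. the trace-class
induced functionals). -/
def IsNormalFunctional {H : Type*} [NormedAddCommGroup H] [InnerProductSpace ℂ H]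
    (ψ : (H →L[ℂ] H) →L[ℂ] ℂ) : Prop :=
  ψ ∈ closure (Submodule.span ℂ {φ : (H →L[ℂ] H) →L[ℂ] ℂ | ∃ ξ η : H, φ = omegaFunctional ξ η} :
    Set ((H →L[ℂ] H) →L[ℂ] ℂ))

/-- A *normal state* on `B(H)`: a positive normal functional of norm one. -/
def IsNormalState {H : Type*} [NormedAddCommGroup H] [InnerProductSpace ℂ H] [CompleteSpace H]
    (φ : (H →L[ℂ] H) →L[ℂ] ℂ) : Prop :=
  IsNormalFunctional φ ∧ ‖φ‖ = 1 ∧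
    ∀ x : H →L[ℂ] H, x.IsPositive → 0 ≤ (φ x).re ∧ (φ x).im = 0

/-- `‖x‖_K := sup {|ψ(x)| : ψ ∈ K}`. -/
def normK {H : Type*} [NormedAddCommGroup H] [InnerProductSpace ℂ H]
    (K : Set ((H →L[ℂ] H) →L[ℂ] ℂ)) (x : H →L[ℂ] H) : ℝ :=
  sSup ((fun ψ : (H →L[ℂ] H) →L[ℂ] ℂ => ‖ψ x‖) '' K)

/-- The Minkowski functional `q_K(ψ) := inf {α ≥ 0 : ψ ∈ αK}`, with value `∞` if no
such `α` exists. -/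
def qK {H : Type*} [NormedAddCommGroup H] [InnerProductSpace ℂ H]
    (K : Set ((H →L[ℂ] H) →L[ℂ] ℂ)) (ψ : (H →L[ℂ] H) →L[ℂ] ℂ) : ℝ≥0∞ :=
  sInf {c : ℝ≥0∞ | ∃ r : ℝ, 0 ≤ r ∧ c = ENNReal.ofReal r ∧ ψ ∈ r • K}


/-- An abstract presentation of the `k`-fold Hilbert space tensor power `H^{⊗k}` of `H`,
realized on a Hilbert space `T`: a continuous multilinear map `tprod` (the elementary tensors
`η₁ ⊗ ... ⊗ η_k`) whose inner products multiply, whose range has dense linear span, together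
with the permutation unitaries `U_π` permuting the tensor factors. -/
structure HilbertTensorPower (k : ℕ) (H T : Type*) [NormedAddCommGroup H]
    [InnerProductSpace ℂ H] [NormedAddCommGroup T] [InnerProductSpace ℂ T] where
  tprod : ContinuousMultilinearMap ℂ (fun _ : Fin k => H) T
  inner_tprod : ∀ ξ η : Fin k → H, ⟪tprod ξ, tprod η⟫_ℂ = ∏ i, ⟪ξ i, η i⟫_ℂ
  span_dense : (Submodule.span ℂ (Set.range ⇑tprod)).topologicalClosure = ⊤
  U : Equiv.Perm (Fin k) → (T →L[ℂ] T)
  U_isometry : ∀ π, Isometry ⇑(U π)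
  U_surjective : ∀ π, Function.Surjective ⇑(U π)
  U_tprod : ∀ (π : Equiv.Perm (Fin k)) (ξ : Fin k → H),
    U π (tprod ξ) = tprod fun i => ξ (π i)

namespace HilbertTensorPower

variable {k : ℕ} {H T : Type*} [NormedAddCommGroup H] [InnerProductSpace ℂ H]
  [NormedAddCommGroup T] [InnerProductSpace ℂ T]

/-- The symmetrization projection `P₊ = (1/k!) Σ_π U_π`. -/
def Pplus (P : HilbertTensorPower k H T) : T →L[ℂ] T :=
  ((k.factorial : ℂ))⁻¹ • ∑ π : Equiv.Perm (Fin k), P.U π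

/-- The antisymmetrization projection `P₋ = (1/k!) Σ_π sign(π) U_π`. -/
def Pminus (P : HilbertTensorPower k H T) : T →L[ℂ] T :=
  ((k.factorial : ℂ))⁻¹ •
    ∑ π : Equiv.Perm (Fin k), (((Equiv.Perm.sign π : ℤ) : ℂ)) • P.U π

/-- The wedge product `η₁ ∧ ... ∧ η_k := √(k!) · P₋(η₁ ⊗ ... ⊗ η_k)`. -/
def wedge (P : HilbertTensorPower k H T) (η : Fin k → H) : T :=
  (Real.sqrt k.factorial : ℂ) • P.Pminus (P.tprod η)

/-- The set `V^{⊗k}` of unit product vectors. -/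
def prodVecs (P : HilbertTensorPower k H T) : Set T :=
  {ζ : T | ∃ η : Fin k → H, (∀ i, ‖η i‖ = 1) ∧ ζ = P.tprod η}

/-- The set `V^{∨k}` of symmetric unit product vectors `η ⊗ ... ⊗ η`. -/
def symVecs (P : HilbertTensorPower k H T) : Set T :=
  {ζ : T | ∃ η : H, ‖η‖ = 1 ∧ ζ = P.tprod fun _ => η}

/-- The set `V^{∧k}` of unit wedge (Slater) vectors. -/
def wedgeVecs (P : HilbertTensorPower k H T) : Set T :=
  {ζ : T | ∃ η : Fin k → H, ζ = P.wedge η ∧ ‖ζ‖ = 1}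

end HilbertTensorPower



section Aux

open scoped InnerProductSpace

variable {T : Type*} [NormedAddCommGroup T] [InnerProductSpace ℂ T] [CompleteSpace T]

set_option maxHeartbeats 1000000
set_option linter.unusedSectionVars false

lemma omega_apply (ξ η : T) (x : T →L[ℂ] T) : omegaFunctional ξ η x = ⟪η, x ξ⟫_ℂ := rfl

lemma omega_norm_le (ξ η : T) : ‖omegaFunctional ξ η‖ ≤ ‖ξ‖ * ‖η‖ := by
  refine ContinuousLinearMap.opNorm_le_bound _ (mul_nonneg (norm_nonneg _) (norm_nonneg _)) ?_
  intro x
  rw [omega_apply]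
  calc ‖⟪η, x ξ⟫_ℂ‖ ≤ ‖η‖ * ‖x ξ‖ := norm_inner_le_norm _ _
    _ ≤ ‖η‖ * (‖x‖ * ‖ξ‖) := by
        gcongr; exact x.le_opNorm ξ
    _ = ‖ξ‖ * ‖η‖ * ‖x‖ := by ring

lemma omega_sub (ξ η ζ : T) :
    omegaFunctional ξ η - omegaFunctional ξ ζ = omegaFunctional ξ (η - ζ) := by
  ext x
  simp [ContinuousLinearMap.sub_apply, omega_apply, inner_sub_left]

lemma isPositive_norm_smul_add {a : T →L[ℂ] T} (ha : IsSelfAdjoint a) :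
    ContinuousLinearMap.IsPositive (((‖a‖ : ℂ)) • 1 + a) := by
  constructor
  · have h1 : IsSelfAdjoint (((‖a‖:ℂ)) • (1 : T →L[ℂ] T)) :=
      IsSelfAdjoint.smul (by exact Complex.conj_ofReal _) (IsSelfAdjoint.one _)
    exact ContinuousLinearMap.isSelfAdjoint_iff_isSymmetric.mp (h1.add ha)
  · intro v
    have h1 : ‖⟪a v, v⟫_ℂ‖ ≤ ‖a‖ * ‖v‖ * ‖v‖ := by
      calc ‖⟪a v, v⟫_ℂ‖ ≤ ‖a v‖ * ‖v‖ := norm_inner_le_norm _ _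
        _ ≤ ‖a‖ * ‖v‖ * ‖v‖ := by gcongr; exact a.le_opNorm v
    have h2 : |(⟪a v, v⟫_ℂ).re| ≤ ‖⟪a v, v⟫_ℂ‖ := Complex.abs_re_le_norm _
    have h3 : (⟪((‖a‖:ℂ)) • v + a v, v⟫_ℂ).re = ‖a‖ * (‖v‖ * ‖v‖) + (⟪a v, v⟫_ℂ).re := by
      rw [inner_add_left, inner_smul_left]
      simp [Complex.conj_ofReal, ← @inner_self_eq_norm_mul_norm ℂ]
    have : ContinuousLinearMap.reApplyInnerSelf (((‖a‖ : ℂ)) • 1 + a) v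
        = (⟪((‖a‖:ℂ)) • v + a v, v⟫_ℂ).re := by
      simp only [ContinuousLinearMap.reApplyInnerSelf, ContinuousLinearMap.add_apply,
        ContinuousLinearMap.smul_apply, ContinuousLinearMap.one_apply, RCLike.re_to_complex]
    rw [this, h3]
    have := abs_le.mp h2
    nlinarith

variable {φ : (T →L[ℂ] T) →L[ℂ] ℂ}

lemma state_selfAdjoint_bound
    (hpos : ∀ x : T →L[ℂ] T, x.IsPositive → 0 ≤ (φ x).re ∧ (φ x).im = 0)
    {a : T →L[ℂ] T} (ha : IsSelfAdjoint a) :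
    (φ a).im = 0 ∧ |(φ a).re| ≤ ‖a‖ * (φ 1).re := by
  have hp := hpos _ (isPositive_norm_smul_add ha)
  have hmpos : ContinuousLinearMap.IsPositive (((‖a‖ : ℂ)) • 1 + -a) := by
    have h := isPositive_norm_smul_add ha.neg
    rwa [norm_neg] at h
  have hm := hpos _ hmpos
  have h1 := hpos 1 (ContinuousLinearMap.isPositive_one)
  have ep : φ (((‖a‖ : ℂ)) • 1 + a) = (‖a‖ : ℂ) * φ 1 + φ a := by
    rw [map_add, map_smul]; rfl
  have em : φ (((‖a‖ : ℂ)) • 1 + -a) = (‖a‖ : ℂ) * φ 1 - φ a := by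
    rw [map_add, map_smul, map_neg, smul_eq_mul]; ring
  rw [ep] at hp; rw [em] at hm
  simp only [Complex.add_re, Complex.add_im, Complex.sub_re, Complex.sub_im,
    Complex.mul_re, Complex.mul_im, Complex.ofReal_re, Complex.ofReal_im] at hp hm
  constructor
  · nlinarith [hp.2, hm.2]
  · rw [abs_le]; constructor <;> nlinarith [hp.1, hm.1]

lemma state_apply_one (hn : ‖φ‖ = 1)
    (hpos : ∀ x : T →L[ℂ] T, x.IsPositive → 0 ≤ (φ x).re ∧ (φ x).im = 0) :
    φ 1 = 1 := by
  have h1 := hpos 1 (ContinuousLinearMap.isPositive_one)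
  have hle : (φ 1).re ≤ 1 := by
    calc (φ 1).re ≤ ‖φ 1‖ := Complex.re_le_norm _
      _ ≤ ‖φ‖ * ‖(1 : T →L[ℂ] T)‖ := φ.le_opNorm 1
      _ ≤ ‖φ‖ * 1 := by
          gcongr
          rw [ContinuousLinearMap.one_def]
          exact ContinuousLinearMap.norm_id_le
      _ = 1 := by rw [hn, mul_one]
  have hge : ‖φ‖ ≤ (φ 1).re := by
    refine ContinuousLinearMap.opNorm_le_bound _ h1.1 ?_
    intro x
    rcases eq_or_ne (φ x) 0 with h0 | h0
    · rw [h0, norm_zero]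
      exact mul_nonneg h1.1 (norm_nonneg x)
    set u : ℂ := (‖φ x‖ : ℂ) / φ x with hu
    have hu1 : ‖u‖ = 1 := by
      rw [hu, norm_div, Complex.norm_real, norm_norm, div_self]
      simpa using h0
    set y : T →L[ℂ] T := u • x with hy
    have hφy : φ y = (‖φ x‖ : ℂ) := by
      rw [hy, map_smul, smul_eq_mul, hu, div_mul_cancel₀ _ h0]
    set A := ContinuousLinearMap.adjoint (𝕜 := ℂ) (E := T) (F := T)
    set a : T →L[ℂ] T := (2 : ℂ)⁻¹ • (y + A y) with hadef
    set b : T →L[ℂ] T := (2 * Complex.I)⁻¹ • (y - A y) with hbdef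
    have hya : y = a + Complex.I • b := by
      rw [hadef, hbdef, smul_smul]
      have : Complex.I * (2 * Complex.I)⁻¹ = (2 : ℂ)⁻¹ := by
        field_simp
      rw [this, ← smul_add]
      have : y + A y + (y - A y) = (2 : ℂ) • y := by
        rw [two_smul]; abel
      rw [this, smul_smul]
      norm_num
    have haSA : IsSelfAdjoint a := by
      rw [ContinuousLinearMap.isSelfAdjoint_iff'] at *
      rw [hadef, map_smulₛₗ, map_add, ContinuousLinearMap.adjoint_adjoint]
      simp [add_comm, map_ofNat]
      rfl
    have hbSA : IsSelfAdjoint b := by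
      rw [ContinuousLinearMap.isSelfAdjoint_iff'] at *
      rw [hbdef, map_smulₛₗ, map_sub, ContinuousLinearMap.adjoint_adjoint]
      have : (starRingEnd ℂ) (2 * Complex.I)⁻¹ = -(2 * Complex.I)⁻¹ := by
        rw [map_inv₀, map_mul, Complex.conj_I, map_ofNat, mul_neg, inv_neg]
      rw [this, neg_smul, ← smul_neg, neg_sub]
    have hna : ‖a‖ ≤ ‖x‖ := by
      have hAy : ‖A y‖ = ‖y‖ := LinearIsometryEquiv.norm_map _ y
      have hyx : ‖y‖ = ‖x‖ := by rw [hy, norm_smul, hu1, one_mul]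
      calc ‖a‖ ≤ ‖(2:ℂ)⁻¹‖ * ‖y + A y‖ := norm_smul_le _ _
        _ ≤ ‖(2:ℂ)⁻¹‖ * (‖y‖ + ‖A y‖) := by gcongr; exact norm_add_le _ _
        _ = ‖x‖ := by
            rw [hAy, hyx, show ‖(2:ℂ)⁻¹‖ = 1/2 by norm_num]; ring
    have hba := state_selfAdjoint_bound hpos haSA
    have hbb := state_selfAdjoint_bound hpos hbSA
    have hyval : (‖φ x‖ : ℝ) = (φ a).re := by
      have : φ y = φ a + Complex.I * φ b := by
        rw [hya, map_add, φ.map_smul Complex.I b, smul_eq_mul]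
      rw [hφy] at this
      have him := congrArg Complex.re this
      simpa [hbb.1] using him
    calc ‖φ x‖ = (φ a).re := hyval
      _ ≤ |(φ a).re| := le_abs_self _
      _ ≤ ‖a‖ * (φ 1).re := hba.2
      _ ≤ ‖x‖ * (φ 1).re := by gcongr; exact h1.1
      _ = (φ 1).re * ‖x‖ := mul_comm _ _
  have hre : (φ 1).re = 1 := le_antisymm hle (hn ▸ hge)
  have him : (φ 1).im = 0 := h1.2
  exact Complex.ext (by simp [hre]) (by simp [him])

lemma unitBallConvex : Convex ℝ {ψ : (T →L[ℂ] T) →L[ℂ] ℂ | ‖ψ‖ ≤ 1} := by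
  intro x hx y hy a b ha hb hab
  simp only [Set.mem_setOf_eq] at *
  have h1 : ‖a • x + b • y‖ ≤ ‖a • x‖ + ‖b • y‖ := by exact norm_add_le _ _
  have h2 : ‖a • x‖ = |a| * ‖x‖ := by exact norm_smul a x
  have h3 : ‖b • y‖ = |b| * ‖y‖ := by exact norm_smul b y
  rw [h2, h3, abs_of_nonneg ha, abs_of_nonneg hb] at h1
  have hx0 : 0 ≤ ‖x‖ := by exact norm_nonneg x
  have hy0 : 0 ≤ ‖y‖ := by exact norm_nonneg y
  nlinarith

lemma hull_norm_le (V : Set T) (hV : ∀ ζ ∈ V, ‖ζ‖ = 1)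
    {ψ : (T →L[ℂ] T) →L[ℂ] ℂ}
    (h : ψ ∈ convexHull ℝ
      {φ : (T →L[ℂ] T) →L[ℂ] ℂ | ∃ ξ ∈ V, ∃ η ∈ V, φ = omegaFunctional ξ η}) :
    ‖ψ‖ ≤ 1 := by
  have hsub : {φ : (T →L[ℂ] T) →L[ℂ] ℂ | ∃ ξ ∈ V, ∃ η ∈ V, φ = omegaFunctional ξ η} ⊆
      {ψ : (T →L[ℂ] T) →L[ℂ] ℂ | ‖ψ‖ ≤ 1} := by
    rintro φ ⟨ξ, hξ, η, hη, rfl⟩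
    show ‖omegaFunctional ξ η‖ ≤ 1
    calc ‖omegaFunctional ξ η‖ ≤ ‖ξ‖ * ‖η‖ := omega_norm_le ξ η
      _ = 1 := by rw [hV ξ hξ, hV η hη, mul_one]
  exact convexHull_min hsub unitBallConvex h

lemma approx_sep (V : Set T) (hV : ∀ ζ ∈ V, ‖ζ‖ = 1)
    {ψ' : (T →L[ℂ] T) →L[ℂ] ℂ}
    (h : ψ' ∈ convexHull ℝ
      {φ : (T →L[ℂ] T) →L[ℂ] ℂ | ∃ ξ ∈ V, ∃ η ∈ V, φ = omegaFunctional ξ η}) :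
    ∃ σ ∈ convexHull ℝ {ψ : (T →L[ℂ] T) →L[ℂ] ℂ | ∃ ξ ∈ V, ψ = omegaFunctional ξ ξ},
      ‖ψ' - σ‖ ^ 2 ≤ 2 - 2 * (ψ' 1).re := by
  rw [convexHull_eq] at h
  obtain ⟨ι, t, w, z, hw0, hw1, hz, hc⟩ := h
  rw [Finset.centerMass_eq_of_sum_1 _ _ hw1] at hc
  have hex : ∀ i : ι, ∃ ξ : T, ∃ η : T,
      i ∈ t → ξ ∈ V ∧ η ∈ V ∧ z i = omegaFunctional ξ η := by
    intro i
    by_cases hi : i ∈ t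
    · obtain ⟨ξ, hξ, η, hη, hzi⟩ := hz i hi
      exact ⟨ξ, η, fun _ => ⟨hξ, hη, hzi⟩⟩
    · exact ⟨0, 0, fun h => absurd h hi⟩
  choose ξv ηv hv using hex
  refine ⟨∑ i ∈ t, w i • omegaFunctional (ξv i) (ξv i), ?_, ?_⟩
  · have hmem : ∀ i ∈ t, omegaFunctional (ξv i) (ξv i) ∈
        {ψ : (T →L[ℂ] T) →L[ℂ] ℂ | ∃ ξ ∈ V, ψ = omegaFunctional ξ ξ} :=
      fun i hi => ⟨ξv i, (hv i hi).1, rfl⟩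
    have := t.centerMass_mem_convexHull hw0 (hw1.symm ▸ zero_lt_one) hmem
    rwa [Finset.centerMass_eq_of_sum_1 _ _ hw1] at this
  set σ := ∑ i ∈ t, w i • omegaFunctional (ξv i) (ξv i) with hσ
  have hψ's : ψ' = ∑ i ∈ t, w i • omegaFunctional (ξv i) (ηv i) := by
    rw [← hc]
    exact Finset.sum_congr rfl fun i hi => by rw [(hv i hi).2.2]
  have hdiff : ψ' - σ = ∑ i ∈ t,
      w i • (omegaFunctional (ξv i) (ηv i) - omegaFunctional (ξv i) (ξv i)) := by
    have hdist : ∑ i ∈ t,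
        (w i • omegaFunctional (ξv i) (ηv i) - w i • omegaFunctional (ξv i) (ξv i))
        = (∑ i ∈ t, w i • omegaFunctional (ξv i) (ηv i))
          - ∑ i ∈ t, w i • omegaFunctional (ξv i) (ξv i) := by
      exact Finset.sum_sub_distrib _ _
    rw [hψ's, hσ, ← hdist]
    exact Finset.sum_congr rfl fun i hi => (smul_sub _ _ _).symm
  have hterm : ∀ i ∈ t,
      ‖omegaFunctional (ξv i) (ηv i) - omegaFunctional (ξv i) (ξv i)‖
        ≤ ‖ηv i - ξv i‖ := by
    intro i hi
    rw [omega_sub]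
    calc ‖omegaFunctional (ξv i) (ηv i - ξv i)‖ ≤ ‖ξv i‖ * ‖ηv i - ξv i‖ :=
          omega_norm_le _ _
      _ = ‖ηv i - ξv i‖ := by rw [hV _ (hv i hi).1, one_mul]
  have hD : ‖ψ' - σ‖ ≤ ∑ i ∈ t, w i * ‖ηv i - ξv i‖ := by
    rw [hdiff]
    have h1 : ‖∑ i ∈ t, w i • (omegaFunctional (ξv i) (ηv i) - omegaFunctional (ξv i) (ξv i))‖
        ≤ ∑ i ∈ t, ‖w i • (omegaFunctional (ξv i) (ηv i) - omegaFunctional (ξv i) (ξv i))‖ := by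
      exact norm_sum_le _ _
    refine h1.trans (Finset.sum_le_sum fun i hi => ?_)
    have h2 : ‖w i • (omegaFunctional (ξv i) (ηv i) - omegaFunctional (ξv i) (ξv i))‖
        = |w i| * ‖omegaFunctional (ξv i) (ηv i) - omegaFunctional (ξv i) (ξv i)‖ := by
      exact norm_smul (β := (T →L[ℂ] T) →L[ℂ] ℂ) (w i) _
    rw [h2, abs_of_nonneg (hw0 i hi)]
    exact mul_le_mul_of_nonneg_left (hterm i hi) (hw0 i hi)
  have hCS : (∑ i ∈ t, w i * ‖ηv i - ξv i‖) ^ 2 ≤ ∑ i ∈ t, w i * ‖ηv i - ξv i‖ ^ 2 := by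
    have := Finset.sum_mul_sq_le_sq_mul_sq t (fun i => Real.sqrt (w i))
      (fun i => Real.sqrt (w i) * ‖ηv i - ξv i‖)
    have e1 : ∀ i ∈ t, Real.sqrt (w i) * (Real.sqrt (w i) * ‖ηv i - ξv i‖)
        = w i * ‖ηv i - ξv i‖ := fun i hi => by
      rw [← mul_assoc, Real.mul_self_sqrt (hw0 i hi)]
    have e2 : ∀ i ∈ t, Real.sqrt (w i) ^ 2 = w i := fun i hi =>
      Real.sq_sqrt (hw0 i hi)
    have e3 : ∀ i ∈ t, (Real.sqrt (w i) * ‖ηv i - ξv i‖) ^ 2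
        = w i * ‖ηv i - ξv i‖ ^ 2 := fun i hi => by
      rw [mul_pow, Real.sq_sqrt (hw0 i hi)]
    rw [Finset.sum_congr rfl e1, Finset.sum_congr rfl e2, Finset.sum_congr rfl e3, hw1,
      one_mul] at this
    exact this
  have hone : (ψ' 1).re = ∑ i ∈ t, w i * (⟪ηv i, ξv i⟫_ℂ).re := by
    rw [hψ's]
    simp only [ContinuousLinearMap.sum_apply, ContinuousLinearMap.smul_apply]
    rw [Complex.re_sum]
    refine Finset.sum_congr rfl fun i hi => ?_
    rw [omega_apply, ContinuousLinearMap.one_apply]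
    simp [Complex.real_smul]
  have hsum : ∑ i ∈ t, w i * ‖ηv i - ξv i‖ ^ 2 = 2 - 2 * (ψ' 1).re := by
    rw [hone]
    have : ∀ i ∈ t, w i * ‖ηv i - ξv i‖ ^ 2
        = 2 * w i - 2 * (w i * (⟪ηv i, ξv i⟫_ℂ).re) := by
      intro i hi
      have hn : ‖ηv i - ξv i‖ ^ 2 = 2 - 2 * (⟪ηv i, ξv i⟫_ℂ).re := by
        have h2 := @norm_sub_sq ℂ _ _ _ _ (ηv i) (ξv i)
        rw [hV _ (hv i hi).2.1, hV _ (hv i hi).1] at h2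
        simp only [RCLike.re_to_complex] at h2
        rw [h2]; ring
      rw [hn]; ring
    rw [Finset.sum_congr rfl this, Finset.sum_sub_distrib, ← Finset.mul_sum,
      ← Finset.mul_sum, hw1, mul_one]
  rw [← hsum]
  have hnn : (0:ℝ) ≤ ‖ψ' - σ‖ := by exact norm_nonneg _
  nlinarith [hD, hCS, hnn]

lemma prodVecs_norm {k : ℕ} {H : Type*} [NormedAddCommGroup H] [InnerProductSpace ℂ H]
    (P : HilbertTensorPower k H T) : ∀ ζ ∈ P.prodVecs, ‖ζ‖ = 1 := by
  rintro ζ ⟨η, hη, rfl⟩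
  have h := P.inner_tprod η η
  have hone : ∀ i, ⟪η i, η i⟫_ℂ = 1 := by
    intro i
    rw [@inner_self_eq_norm_sq_to_K ℂ, hη i]
    norm_num
  rw [Finset.prod_congr rfl (fun i _ => hone i), Finset.prod_const_one] at h
  have hn := @norm_eq_sqrt_re_inner ℂ _ _ _ _ (P.tprod η)
  rw [h] at hn
  simpa using hn

end Aux

set_option maxHeartbeats 4000000
set_option linter.unusedSectionVars false

/-- Let `K^{⊗k}` be the norm-closed convex hull of the vector functionals
`ω_{ξ,η}` with `ξ, η` unit product vectors of `H^{⊗k}`. Then every normal state `φ` on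
`B(H^{⊗k})` satisfies `q_{K^{⊗k}}(φ) ≥ 1`, with equality iff `φ` is separable, i.e. `φ` lies
in the norm-closed convex hull of `{ω_ξ : ξ ∈ V^{⊗k}}`. -/
theorem stmt8 {H T : Type*} [NormedAddCommGroup H] [InnerProductSpace ℂ H] [CompleteSpace H]
    [NormedAddCommGroup T] [InnerProductSpace ℂ T] [CompleteSpace T]
    (k : ℕ) (P : HilbertTensorPower k H T)
    (K : Set ((T →L[ℂ] T) →L[ℂ] ℂ))
    (hK : K = closure (convexHull ℝ
      {φ : (T →L[ℂ] T) →L[ℂ] ℂ | ∃ ξ ∈ P.prodVecs, ∃ η ∈ P.prodVecs,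
        φ = omegaFunctional ξ η}))
    (φ : (T →L[ℂ] T) →L[ℂ] ℂ) (hφ : IsNormalState φ) :
    1 ≤ qK K φ ∧
    (qK K φ = 1 ↔ φ ∈ closure (convexHull ℝ
      {ψ : (T →L[ℂ] T) →L[ℂ] ℂ | ∃ ξ ∈ P.prodVecs, ψ = omegaFunctional ξ ξ})) := by
  have hVnorm := prodVecs_norm P
  have hφ1 : φ 1 = 1 := state_apply_one hφ.2.1 hφ.2.2
  -- every admissible scaling factor is at least 1
  have hA : ∀ r : ℝ, 0 ≤ r → φ ∈ r • K → 1 ≤ r := by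
    intro r hr hm
    obtain ⟨ψ, hψK, hrψ⟩ := hm
    have hψ1 : ‖ψ‖ ≤ 1 := by
      rw [hK] at hψK
      have hcl : IsClosed {χ : (T →L[ℂ] T) →L[ℂ] ℂ | ‖χ‖ ≤ 1} :=
        isClosed_le (by exact continuous_norm) continuous_const
      have hsub := closure_minimal
        (fun χ hχ => hull_norm_le P.prodVecs hVnorm hχ) hcl
      exact hsub hψK
    have hns : ‖φ‖ = |r| * ‖ψ‖ := by
      rw [← hrψ]; exact norm_smul r ψ
    rw [hφ.2.1, abs_of_nonneg hr] at hns
    nlinarith [norm_nonneg (ψ : (T →L[ℂ] T) →L[ℂ] ℂ)]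
  have part1 : 1 ≤ qK K φ := by
    refine le_sInf ?_
    rintro c ⟨r, hr0, rfl, hmem⟩
    exact ENNReal.one_le_ofReal.mpr (hA r hr0 hmem)
  refine ⟨part1, ?_, ?_⟩
  · -- qK = 1 → separable
    intro h
    rw [Metric.mem_closure_iff]
    intro δ hδ
    set ε : ℝ := min 1 ((δ/8)^2) with hεdef
    have hε : 0 < ε := lt_min one_pos (by positivity)
    have hε1 : ε ≤ 1 := min_le_left _ _
    have hs8 : Real.sqrt ε ≤ δ/8 := by
      have : Real.sqrt ε ≤ Real.sqrt ((δ/8)^2) := Real.sqrt_le_sqrt (min_le_right _ _)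
      rwa [Real.sqrt_sq (by positivity)] at this
    have hsq : Real.sqrt ε * Real.sqrt ε = ε := Real.mul_self_sqrt hε.le
    have hs0 : 0 ≤ Real.sqrt ε := Real.sqrt_nonneg ε
    have hs1 : Real.sqrt ε ≤ 1 := by nlinarith
    have hεs : ε ≤ Real.sqrt ε := by nlinarith
    have h1 : qK K φ < ENNReal.ofReal (1+ε) := by
      rw [h]; exact ENNReal.one_lt_ofReal.mpr (by linarith)
    rw [qK] at h1
    obtain ⟨c, hcmem, hclt⟩ := sInf_lt_iff.mp h1
    obtain ⟨r, hr0, rfl, hmem⟩ := hcmem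
    have hr2 : r < 1 + ε := by
      rwa [ENNReal.ofReal_lt_ofReal_iff (by linarith)] at hclt
    have hr1 : 1 ≤ r := hA r hr0 hmem
    have hrpos : 0 < r := lt_of_lt_of_le one_pos hr1
    obtain ⟨y, hyK, hry0⟩ := hmem
    have hry : r • y = φ := hry0
    rw [hK] at hyK
    obtain ⟨ψ', hψ'conv, hψ'close⟩ := Metric.mem_closure_iff.mp hyK ε hε
    have hyψ : ‖y - ψ'‖ < ε := by
      have hh := hψ'close
      rw [dist_eq_norm] at hh
      exact hh
    obtain ⟨σ, hσmem, hσbound⟩ := approx_sep P.prodVecs hVnorm hψ'conv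
    refine ⟨σ, hσmem, ?_⟩
    have hdg : dist φ σ = ‖φ - σ‖ := by exact dist_eq_norm φ σ
    rw [hdg]
    -- value of y at 1
    have hy1 : y 1 = ((r : ℂ))⁻¹ := by
      have hv : (r : ℂ) * y 1 = 1 := by
        have h2 : φ 1 = (r • y) 1 := by rw [hry]
        rw [hφ1] at h2
        have h3 : (r • y) 1 = (r : ℂ) * y 1 := by
          simp [Complex.real_smul]
        rw [h3] at h2
        exact h2.symm
      exact eq_inv_of_mul_eq_one_right hv
    have hrey : (y 1).re = r⁻¹ := by
      rw [hy1, ← Complex.ofReal_inv, Complex.ofReal_re]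
    -- lower bound on re ψ'(1)
    have hd1 : ‖ψ' 1 - y 1‖ ≤ ε := by
      have e1 : ψ' 1 - y 1 = (ψ' - y) 1 := by
        simp [ContinuousLinearMap.sub_apply]
      have e2 : ‖(ψ' - y) 1‖ ≤ ‖ψ' - y‖ * ‖(1 : T →L[ℂ] T)‖ := by
        exact (ψ' - y).le_opNorm 1
      have e3 : ‖(1 : T →L[ℂ] T)‖ ≤ 1 := by
        rw [ContinuousLinearMap.one_def]; exact ContinuousLinearMap.norm_id_le
      have e4 : ‖ψ' - y‖ = ‖y - ψ'‖ := by exact norm_sub_rev ψ' y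
      have e5 : ‖ψ' - y‖ * ‖(1 : T →L[ℂ] T)‖ ≤ ε * 1 := by
        apply mul_le_mul _ e3 (by exact norm_nonneg _) hε.le
        rw [e4]; exact hyψ.le
      rw [e1]
      calc ‖(ψ' - y) 1‖ ≤ ‖ψ' - y‖ * ‖(1 : T →L[ℂ] T)‖ := e2
        _ ≤ ε * 1 := e5
        _ = ε := mul_one ε
    have habs : |(ψ' 1 - y 1).re| ≤ ‖ψ' 1 - y 1‖ := by
      exact Complex.abs_re_le_norm _
    have hsubre : (ψ' 1 - y 1).re = (ψ' 1).re - (y 1).re := by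
      simp [Complex.sub_re]
    have hinv : 1 - ε ≤ r⁻¹ := by
      have hrr : r * r⁻¹ = 1 := mul_inv_cancel₀ (ne_of_gt hrpos)
      have hinv0 : 0 < r⁻¹ := inv_pos.mpr hrpos
      nlinarith
    have hψ'1re : 1 - 2*ε ≤ (ψ' 1).re := by
      have := abs_le.mp habs
      rw [hsubre] at this
      have hL := this.1
      have := hd1
      linarith [hL, hrey ▸ hinv]
    -- norm bounds
    have hσ1 : ‖σ‖ ≤ 1 := by
      refine hull_norm_le P.prodVecs hVnorm (convexHull_mono ?_ hσmem)
      rintro χ ⟨ξ, hξ, rfl⟩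
      exact ⟨ξ, hξ, ξ, hξ, rfl⟩
    have hψ'σ : ‖ψ' - σ‖ ≤ 2 * Real.sqrt ε := by
      have h4 : ‖ψ' - σ‖^2 ≤ 4*ε := by nlinarith [hσbound, hψ'1re]
      nlinarith [norm_nonneg (ψ' - σ), hsq, hs0, h4]
    -- assemble
    have hsplit : φ - σ = (φ - r • ψ') + (r • ψ' - r • σ) + (r • σ - σ) := by
      abel
    have t1 : ‖φ - r • ψ'‖ ≤ r * ε := by
      have e1 : φ - r • ψ' = r • (y - ψ') := by rw [← hry, smul_sub]
      have e2 : ‖r • (y - ψ')‖ = |r| * ‖y - ψ'‖ := by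
        exact norm_smul (β := (T →L[ℂ] T) →L[ℂ] ℂ) r _
      rw [e1, e2, abs_of_nonneg hr0]
      exact mul_le_mul_of_nonneg_left hyψ.le hr0
    have t2 : ‖r • ψ' - r • σ‖ ≤ r * (2 * Real.sqrt ε) := by
      have e1 : r • ψ' - r • σ = r • (ψ' - σ) := by
        exact (smul_sub r ψ' σ).symm
      have e2 : ‖r • (ψ' - σ)‖ = |r| * ‖ψ' - σ‖ := by
        exact norm_smul (β := (T →L[ℂ] T) →L[ℂ] ℂ) r _
      rw [e1, e2, abs_of_nonneg hr0]
      exact mul_le_mul_of_nonneg_left hψ'σ hr0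
    have t3 : ‖r • σ - σ‖ ≤ r - 1 := by
      have e0 : r • σ - σ = (r - 1) • σ := by
        have ha : (r - 1) • σ = r • σ - (1:ℝ) • σ := by exact sub_smul r 1 σ
        have hb : (1:ℝ) • σ = σ := by exact one_smul ℝ σ
        rw [ha, hb]
      have e2 : ‖(r - 1) • σ‖ = |r - 1| * ‖σ‖ := by
        exact norm_smul (β := (T →L[ℂ] T) →L[ℂ] ℂ) (r-1) _
      rw [e0, e2, abs_of_nonneg (by linarith)]
      calc (r-1) * ‖σ‖ ≤ (r-1) * 1 :=
            mul_le_mul_of_nonneg_left hσ1 (by linarith)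
        _ = r - 1 := mul_one _
    have tri : ‖φ - σ‖ ≤ ‖φ - r • ψ'‖ + ‖r • ψ' - r • σ‖ + ‖r • σ - σ‖ := by
      rw [hsplit]
      have u1 : ‖(φ - r • ψ') + (r • ψ' - r • σ) + (r • σ - σ)‖
          ≤ ‖(φ - r • ψ') + (r • ψ' - r • σ)‖ + ‖r • σ - σ‖ := by
        exact norm_add_le _ _
      have u2 : ‖(φ - r • ψ') + (r • ψ' - r • σ)‖ ≤ ‖φ - r • ψ'‖ + ‖r • ψ' - r • σ‖ := by
        exact norm_add_le _ _
      linarith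
    have hfin : ‖φ - σ‖ ≤ 7 * Real.sqrt ε := by
      have a1 : (0:ℝ) ≤ (2 - r) * ε := mul_nonneg (by linarith) hε.le
      have a2 : (0:ℝ) ≤ (2 - r) * Real.sqrt ε := mul_nonneg (by linarith) hs0
      nlinarith [t1, t2, t3, tri]
    linarith [hfin, hs8, hδ]
  · -- separable → qK = 1
    intro h
    have hsub : closure (convexHull ℝ
        {ψ : (T →L[ℂ] T) →L[ℂ] ℂ | ∃ ξ ∈ P.prodVecs, ψ = omegaFunctional ξ ξ}) ⊆ K := by
      rw [hK]
      refine closure_mono (convexHull_mono ?_)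
      rintro ψ ⟨ξ, hξ, rfl⟩
      exact ⟨ξ, hξ, ξ, hξ, rfl⟩
    have hφK : φ ∈ K := hsub h
    have hle : qK K φ ≤ 1 := by
      apply sInf_le
      refine ⟨1, zero_le_one, ENNReal.ofReal_one.symm, ?_⟩
      rw [one_smul]
      exact hφK
    exact le_antisymm hle part1
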